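/- Let G be a generalized star (a tree with exactly one vertex of degree at least 3, called its center) and let i be its center. Then there is no matrix A ∈ 𝒮(G) with null(A) = 2 and null(A(i)) = 1; that is, (G,i) does not allow the nullity pair (2,1). -/

import Mathlib

open Matrix

/-- The nullity of a square real matrix: the dimension of its kernel. -/
noncomputable def nullity {V : Type*} [Fintype V] (A : Matrix V V ℝ) : ℕ :=
  Module.finrank ℝ (LinearMap.ker A.mulVecLin)

/-- The principal submatrix of `A` obtained by deleting row and column `i`. -/
def deleteRC {V : Type*} (A : Matrix V V ℝ) (i : V) :
    Matrix {v : V // v ≠ i} {v : V // v ≠ i} ℝ :=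
  A.submatrix (fun v => (v : V)) (fun v => (v : V))

/-- `A` has the `i`-strong nullity interlacing property. -/
def HasSNIP {V : Type*} [Fintype V] [DecidableEq V] (A : Matrix V V ℝ) (i : V) : Prop :=
  ∀ X : Matrix V V ℝ, X.IsSymm → A.hadamard X = 0 →
    (1 : Matrix V V ℝ).hadamard X = 0 →
    (∀ r, r ≠ i → ∀ c, (A * X) r c = 0) → X = 0

/-- `A` has the strong Arnold property. -/
def HasSAP {V : Type*} [Fintype V] [DecidableEq V] (A : Matrix V V ℝ) : Prop :=
  ∀ X : Matrix V V ℝ, X.IsSymm → A.hadamard X = 0 →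
    (1 : Matrix V V ℝ).hadamard X = 0 → A * X = 0 → X = 0

/-- `A` belongs to `𝒮(G)`. -/
def InSG {V : Type*} (G : SimpleGraph V) (A : Matrix V V ℝ) : Prop :=
  A.IsSymm ∧ ∀ u v : V, u ≠ v → (A u v ≠ 0 ↔ G.Adj u v)

/-- `(G,i)` allows the nullity pair `(k,l)`. -/
def Allows {V : Type*} [Fintype V] [DecidableEq V] (G : SimpleGraph V) (i : V)
    (k l : ℕ) : Prop :=
  ∃ A : Matrix V V ℝ, InSG G A ∧ nullity A = k ∧ nullity (deleteRC A i) = l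

/-- `(G,i)` allows the nullity pair `(k,l)` with the SNIP. -/
def AllowsSNIP {V : Type*} [Fintype V] [DecidableEq V] (G : SimpleGraph V) (i : V)
    (k l : ℕ) : Prop :=
  ∃ A : Matrix V V ℝ, InSG G A ∧ nullity A = k ∧ nullity (deleteRC A i) = l ∧ HasSNIP A i




/-- Split a sum over `V` into the `i`-term and a sum over the subtype `{v // v ≠ i}`. -/
lemma sum_split {V : Type*} [Fintype V] [DecidableEq V] (i : V) (f : V → ℝ) :
    ∑ v, f v = f i + ∑ v : {v : V // v ≠ i}, f v := by
  rw [← Finset.add_sum_erase _ f (Finset.mem_univ i)]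
  congr 1
  rw [← Finset.sum_subtype (Finset.univ.erase i) (fun x => by simp) f]

/-- The graph `G` with all edges at `i` removed. -/
def delVert {V : Type*} (G : SimpleGraph V) (i : V) : SimpleGraph V where
  Adj u v := G.Adj u v ∧ u ≠ i ∧ v ≠ i
  symm := ⟨by rintro u v ⟨h, hu, hv⟩; exact ⟨h.symm, hv, hu⟩⟩
  loopless := ⟨by rintro u ⟨h, _, _⟩; exact G.loopless.irrefl u h⟩

lemma delVert_le {V : Type*} (G : SimpleGraph V) (i : V) : delVert G i ≤ G :=
  fun _ _ h => h.1

lemma delVert_support_ne {V : Type*} (G : SimpleGraph V) (i : V) {a b : V}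
    (w : (delVert G i).Walk a b) (hb : b ≠ i) : ∀ v ∈ w.support, v ≠ i := by
  induction w with
  | nil => simpa using hb
  | cons h w ih =>
      intro v hv
      rw [SimpleGraph.Walk.support_cons, List.mem_cons] at hv
      rcases hv with rfl | hv
      · exact h.2.1
      · exact ih hb v hv

lemma not_reach {V : Type*} [DecidableEq V] {G : SimpleGraph V} (htree : G.IsTree) {i n1 n2 : V}
    (h1 : G.Adj i n1) (h2 : G.Adj i n2) (hne : n1 ≠ n2) :
    ¬ (delVert G i).Reachable n1 n2 := by
  rintro ⟨w⟩
  have hws : ∀ v ∈ w.support, v ≠ i := delVert_support_ne G i w h2.ne'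
  let wG : G.Walk n1 n2 := w.mapLe (delVert_le G i)
  have hwGs : ∀ v ∈ wG.support, v ≠ i := by
    intro v hv
    have : v ∈ w.support := by
      simpa [wG, SimpleGraph.Walk.mapLe, SimpleGraph.Walk.support_map] using hv
    exact hws v this
  let p1 : G.Path n1 n2 := wG.toPath
  have hip1 : i ∉ p1.1.support := fun hmem =>
    (hwGs i (SimpleGraph.Walk.support_toPath_subset wG (by exact_mod_cast hmem))) rfl
  let p2 : G.Path n1 n2 :=
    ⟨SimpleGraph.Walk.cons h1.symm (SimpleGraph.Walk.cons h2 SimpleGraph.Walk.nil), by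
      simp [SimpleGraph.Walk.isPath_def, h1.ne', hne, h2.ne]⟩
  have := SimpleGraph.isAcyclic_iff_path_unique.mp htree.IsAcyclic p1 p2
  rw [this] at hip1
  simp [p2] at hip1

lemma delVert_adj {V : Type*} (G : SimpleGraph V) (i : V) (u v : V) :
    (delVert G i).Adj u v ↔ G.Adj u v ∧ u ≠ i ∧ v ≠ i := Iff.rfl


lemma vanish_along {V : Type*} [Fintype V] [DecidableEq V]
    (G : SimpleGraph V) [DecidableRel G.Adj] (i : V)
    (hdeg2 : ∀ u : V, u ≠ i → G.degree u ≤ 2)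
    (A : Matrix V V ℝ)
    (hadj : ∀ u v : V, u ≠ v → (A u v ≠ 0 ↔ G.Adj u v))
    (x : V → ℝ) (hx : A.mulVec x = 0)
    (hxi : x i = 0) (hnb : ∀ n, G.Adj i n → x n = 0) :
    ∀ (a c : V) (w : G.Walk a c), c = i → w.IsPath → ∀ u ∈ w.support, x u = 0 := by
  intro a c w
  induction w with
  | nil =>
      rintro rfl _ u hu
      rw [SimpleGraph.Walk.support_nil, List.mem_singleton] at hu
      subst hu; exact hxi
  | @cons v b c h w' ih =>
      intro heq hp u hu
      have hp' : w'.IsPath := hp.of_cons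
      have ihall := ih heq hp'
      rw [SimpleGraph.Walk.support_cons, List.mem_cons] at hu
      rcases hu with rfl | hu
      · -- need x u = 0 where u = v, h : G.Adj v b
        have hxb : x b = 0 := ihall b w'.start_mem_support
        cases w' with
        | nil => subst heq; exact hnb u h.symm
        | @cons _ t _ h2 w'' =>
            -- b ≠ i
            have hbne : b ≠ i := by
              subst heq
              have hnd : (SimpleGraph.Walk.cons h2 w'').support.Nodup :=
                (SimpleGraph.Walk.isPath_def _).mp hp'
              rw [SimpleGraph.Walk.support_cons] at hnd
              have hbni : b ∉ w''.support := (List.nodup_cons.mp hnd).1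
              exact fun hbi => hbni (hbi ▸ w''.end_mem_support)
            have hxt : x t = 0 := by
              apply ihall
              rw [SimpleGraph.Walk.support_cons]
              exact List.mem_cons_of_mem _ w''.start_mem_support
            have hvns : u ∉ (SimpleGraph.Walk.cons h2 w'').support :=
              ((SimpleGraph.Walk.cons_isPath_iff _ _).mp hp).2
            have hvt : u ≠ t := by
              intro hvt
              apply hvns
              rw [SimpleGraph.Walk.support_cons]
              exact List.mem_cons_of_mem _ (by rw [hvt]; exact w''.start_mem_support)
            -- neighbors of b are exactly {u, t}
            have hsub : ({u, t} : Finset V) ⊆ G.neighborFinset b := by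
              intro k hk
              rw [Finset.mem_insert, Finset.mem_singleton] at hk
              rcases hk with rfl | rfl
              · exact (SimpleGraph.mem_neighborFinset _ _ _).mpr h.symm
              · exact (SimpleGraph.mem_neighborFinset _ _ _).mpr h2
            have hcard : (G.neighborFinset b).card ≤ ({u, t} : Finset V).card := by
              rw [Finset.card_insert_of_notMem (by simpa using hvt), Finset.card_singleton,
                SimpleGraph.card_neighborFinset_eq_degree]
              exact hdeg2 b hbne
            have hEQ : ({u, t} : Finset V) = G.neighborFinset b :=
              Finset.eq_of_subset_of_card_le hsub hcard
            -- row b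
            have hrow : ∑ k, A b k * x k = 0 := by
              have := congrFun hx b
              simpa [Matrix.mulVec, dotProduct] using this
            have hred : ∑ k, A b k * x k = A b u * x u := by
              apply Finset.sum_eq_single_of_mem u (Finset.mem_univ u)
              intro k _ hkv
              by_cases hkb : k = b
              · subst hkb; rw [hxb, mul_zero]
              · by_cases hkt : k = t
                · subst hkt; rw [hxt, mul_zero]
                · have hnadj : ¬ G.Adj b k := by
                    intro hbk
                    have : k ∈ ({u, t} : Finset V) := by
                      rw [hEQ]; exact (SimpleGraph.mem_neighborFinset _ _ _).mpr hbk
                    simp [hkv, hkt] at this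
                  have : A b k = 0 := by
                    by_contra hne
                    exact hnadj ((hadj b k (Ne.symm hkb)).mp hne)
                  rw [this, zero_mul]
            have hAbv : A b u ≠ 0 := (hadj b u (Ne.symm h.ne)).mpr h.symm
            have h0 := hred ▸ hrow
            rcases mul_eq_zero.mp h0 with h0' | h0'
            · exact absurd h0' hAbv
            · exact h0'
      · exact ihall u hu

lemma vanish_all {V : Type*} [Fintype V] [DecidableEq V]
    (G : SimpleGraph V) [DecidableRel G.Adj] (i : V) (htree : G.IsTree)
    (hdeg2 : ∀ u : V, u ≠ i → G.degree u ≤ 2)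
    (A : Matrix V V ℝ)
    (hadj : ∀ u v : V, u ≠ v → (A u v ≠ 0 ↔ G.Adj u v))
    (x : V → ℝ) (hx : A.mulVec x = 0)
    (hxi : x i = 0) (hnb : ∀ n, G.Adj i n → x n = 0) :
    x = 0 := by
  funext v
  obtain ⟨w⟩ := (htree.isConnected.preconnected v i)
  exact vanish_along G i hdeg2 A hadj x hx hxi hnb v i w.toPath.1 rfl w.toPath.2
    v w.toPath.1.start_mem_support

/-- a generalized star rooted at its center does not allow the
nullity pair `(2,1)`. -/
theorem stmt15 {V : Type*} [Fintype V] [DecidableEq V] (G : SimpleGraph V)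
    [DecidableRel G.Adj] (i : V) (htree : G.IsTree) (hdeg : 3 ≤ G.degree i)
    (huniq : ∀ v : V, 3 ≤ G.degree v → v = i) :
    ¬ Allows G i 2 1 := by
  classical
  rintro ⟨A, ⟨hsym, hadj⟩, hnA, hnAi⟩
  have hdeg2 : ∀ u : V, u ≠ i → G.degree u ≤ 2 := by
    intro u hu
    by_contra hle
    exact hu (huniq u (by omega))
  -- Step 1: get x ∈ ker A with x i = 0, x ≠ 0
  obtain ⟨x, hxker, hxi, hx0⟩ :
      ∃ x : V → ℝ, A.mulVec x = 0 ∧ x i = 0 ∧ x ≠ 0 := by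
    set K := LinearMap.ker A.mulVecLin with hK
    let ψ : K →ₗ[ℝ] ℝ := (LinearMap.proj i).comp K.subtype
    have hninj : ¬ Function.Injective ψ := by
      intro hinj
      have hle := LinearMap.finrank_le_finrank_of_injective hinj
      rw [show Module.finrank ℝ K = 2 from hnA, Module.finrank_self] at hle
      omega
    have hne : LinearMap.ker ψ ≠ ⊥ := fun h => hninj (LinearMap.ker_eq_bot.mp h)
    obtain ⟨y, hy, h0⟩ := (Submodule.ne_bot_iff _).mp hne
    refine ⟨(y : V → ℝ), ?_, ?_, ?_⟩
    · have h : A.mulVecLin (y : V → ℝ) = 0 := LinearMap.mem_ker.mp y.2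
      rw [Matrix.mulVecLin_apply] at h
      exact h
    · exact hy
    · intro h
      exact h0 (Subtype.ext h)
  -- Row facts
  have hrow : ∀ u : V, ∑ k, A u k * x k = 0 := by
    intro u
    have := congrFun hxker u
    simpa [Matrix.mulVec, dotProduct] using this
  -- Case on the set of neighbors where x is nonzero
  by_cases hS0 : ∀ n, G.Adj i n → x n = 0
  · exact hx0 (vanish_all G i htree hdeg2 A hadj x hxker hxi hS0)
  push_neg at hS0
  obtain ⟨n1, hn1adj, hn1x⟩ := hS0
  by_cases hS1 : ∀ n, G.Adj i n → x n ≠ 0 → n = n1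
  · -- row i gives a contradiction
    have hred : ∑ k, A i k * x k = A i n1 * x n1 := by
      apply Finset.sum_eq_single_of_mem n1 (Finset.mem_univ n1)
      intro k _ hkn
      by_cases hki : k = i
      · subst hki; rw [hxi, mul_zero]
      · by_cases hAk : G.Adj i k
        · rcases eq_or_ne (x k) 0 with h | h
          · rw [h, mul_zero]
          · exact absurd (hS1 k hAk h) hkn
        · have : A i k = 0 := by
            by_contra hne
            exact hAk ((hadj i k (Ne.symm hki)).mp hne)
          rw [this, zero_mul]
    have hAin1 : A i n1 ≠ 0 := (hadj i n1 hn1adj.ne).mpr hn1adj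
    have := hred ▸ hrow i
    rcases mul_eq_zero.mp this with h | h
    · exact hAin1 h
    · exact hn1x h
  push_neg at hS1
  obtain ⟨n2, hn2adj, hn2x, hn21⟩ := hS1
  -- Big case
  have hn1i : n1 ≠ i := hn1adj.ne'
  have hn2i : n2 ≠ i := hn2adj.ne'
  have hnr : ¬ (delVert G i).Reachable n1 n2 := not_reach htree hn1adj hn2adj (Ne.symm hn21)
  set z : V → ℝ := fun v => if (delVert G i).Reachable n1 v then x v else 0 with hz
  have hzn1 : z n1 = x n1 := if_pos (SimpleGraph.Reachable.refl n1)
  have hzn2 : z n2 = 0 := if_neg hnr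
  let x' : {v : V // v ≠ i} → ℝ := fun v => x v
  let z' : {v : V // v ≠ i} → ℝ := fun v => z v
  have hsub : ∀ (f : V → ℝ) (u : {v : V // v ≠ i}),
      ((deleteRC A i).mulVecLin fun v => f v) u = ∑ v : {v : V // v ≠ i}, A u.1 v.1 * f v.1 := by
    intro f u
    simp [Matrix.mulVecLin_apply, Matrix.mulVec, dotProduct, deleteRC]
  have hrowsub : ∀ u : {v : V // v ≠ i}, ∑ v : {v : V // v ≠ i}, A u.1 v.1 * x v.1 = 0 := by
    intro u
    have := hrow u.1
    rw [sum_split i (fun k => A u.1 k * x k), hxi, mul_zero, zero_add] at this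
    exact this
  have hx'mem : x' ∈ LinearMap.ker (deleteRC A i).mulVecLin := by
    rw [LinearMap.mem_ker]
    funext u
    simp only [Pi.zero_apply]
    rw [hsub x u]
    exact hrowsub u
  have hz'mem : z' ∈ LinearMap.ker (deleteRC A i).mulVecLin := by
    rw [LinearMap.mem_ker]
    funext u
    simp only [Pi.zero_apply]
    rw [hsub z u]
    by_cases hu : (delVert G i).Reachable n1 u.1
    · rw [← hrowsub u]
      apply Finset.sum_congr rfl
      intro v _
      by_cases hv : (delVert G i).Reachable n1 v.1
      · rw [hz]; simp [hv]
      · have hA : A u.1 v.1 = 0 := by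
          by_contra hA
          have huv : u.1 ≠ v.1 := fun h => hv (h ▸ hu)
          have : (delVert G i).Adj u.1 v.1 :=
            (delVert_adj G i u.1 v.1).mpr ⟨(hadj u.1 v.1 huv).mp hA, u.2, v.2⟩
          exact hv (hu.trans this.reachable)
        rw [hA, zero_mul, zero_mul]
    · apply Finset.sum_eq_zero
      intro v _
      by_cases hv : (delVert G i).Reachable n1 v.1
      · have hA : A u.1 v.1 = 0 := by
          by_contra hA
          have huv : u.1 ≠ v.1 := fun h => hu (h ▸ hv)
          have : (delVert G i).Adj v.1 u.1 :=
            (delVert_adj G i v.1 u.1).mpr ⟨((hadj u.1 v.1 huv).mp hA).symm, v.2, u.2⟩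
          exact hu (hv.trans this.reachable)
        rw [hA, zero_mul]
      · have hzv : z v.1 = 0 := if_neg hv
        rw [hzv, mul_zero]
  -- linear independence
  set K' := LinearMap.ker (deleteRC A i).mulVecLin with hK'
  have hli : LinearIndependent ℝ ![(⟨x', hx'mem⟩ : K'), (⟨z', hz'mem⟩ : K')] := by
    rw [LinearIndependent.pair_iff]
    intro s t hst
    have hval : s • x' + t • z' = 0 := by
      have := congrArg (Subtype.val) hst
      simpa using this
    have h2 := congrFun hval ⟨n2, hn2i⟩
    simp only [Pi.add_apply, Pi.smul_apply, smul_eq_mul, Pi.zero_apply] at h2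
    have hx'n2 : x' ⟨n2, hn2i⟩ = x n2 := rfl
    have hz'n2 : z' ⟨n2, hn2i⟩ = 0 := hzn2
    rw [hx'n2, hz'n2, mul_zero, add_zero] at h2
    have hs : s = 0 := by
      rcases mul_eq_zero.mp h2 with h | h
      · exact h
      · exact absurd h hn2x
    subst hs
    have h1 := congrFun hval ⟨n1, hn1i⟩
    simp only [Pi.add_apply, Pi.smul_apply, smul_eq_mul, Pi.zero_apply, zero_mul, zero_add] at h1
    have hz'n1 : z' ⟨n1, hn1i⟩ = x n1 := hzn1
    rw [hz'n1] at h1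
    refine ⟨rfl, ?_⟩
    rcases mul_eq_zero.mp h1 with h | h
    · exact h
    · exact absurd h hn1x
  have hcard := hli.fintype_card_le_finrank
  rw [show Module.finrank ℝ K' = 1 from hnAi] at hcard
  simp at hcard
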